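/- Let w₁, w₂, w₃ be positive reals satisfying the strict triangle inequalities, and set α_{i0j} = arccos((w_k² − w_i² − w_j²)/(2 w_i w_j)) for {i,j,k} = {1,2,3}. Then α₁₀₂ + α₂₀₃ + α₁₀₃ = 2π. -/

import Mathlib

open Real EuclideanGeometry

lemma aux_cos_from_law (θ a b c : ℝ) (hb : 0 < b) (hc : 0 < c)
    (h : a ^ 2 = b ^ 2 + c ^ 2 - 2 * b * c * Real.cos θ)
    (hθ1 : 0 ≤ θ) (hθ2 : θ ≤ Real.pi) :
    θ = Real.arccos ((b ^ 2 + c ^ 2 - a ^ 2) / (2 * b * c)) := by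
  have hcos : Real.cos θ = (b ^ 2 + c ^ 2 - a ^ 2) / (2 * b * c) := by
    field_simp
    linarith
  rw [← hcos, Real.arccos_cos hθ1 hθ2]

lemma aux_triangle_angles (a b c : ℝ) (ha : 0 < a) (hb : 0 < b) (hc : 0 < c)
    (h1 : a < b + c) (h2 : b < a + c) (h3 : c < a + b) :
    Real.arccos ((b ^ 2 + c ^ 2 - a ^ 2) / (2 * b * c))
      + Real.arccos ((a ^ 2 + c ^ 2 - b ^ 2) / (2 * a * c))
      + Real.arccos ((a ^ 2 + b ^ 2 - c ^ 2) / (2 * a * b)) = Real.pi := by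
  set x : ℝ := (b ^ 2 + c ^ 2 - a ^ 2) / (2 * c) with hx
  have hy2 : 0 ≤ b ^ 2 - x ^ 2 := by
    rw [hx, div_pow, sub_nonneg, div_le_iff₀ (by positivity)]
    nlinarith [mul_pos (mul_pos (sub_pos.2 h1) (sub_pos.2 h2)) (mul_pos (sub_pos.2 h3) (by positivity : (0:ℝ) < a + b + c))]
  set y : ℝ := Real.sqrt (b ^ 2 - x ^ 2) with hy
  have hysq : y ^ 2 = b ^ 2 - x ^ 2 := Real.sq_sqrt hy2
  set A : EuclideanSpace ℝ (Fin 2) := !₂[0, 0] with hA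
  set B : EuclideanSpace ℝ (Fin 2) := !₂[c, 0] with hB
  set C : EuclideanSpace ℝ (Fin 2) := !₂[x, y] with hC
  have hdAB : dist A B = c := by
    rw [EuclideanSpace.dist_eq]
    simp [hA, hB, Real.dist_eq, Fin.sum_univ_two, sq_abs]
    exact Real.sqrt_sq hc.le
  have hdAC : dist A C = b := by
    rw [EuclideanSpace.dist_eq]
    simp [hA, hC, Real.dist_eq, Fin.sum_univ_two, sq_abs]
    rw [show x ^ 2 + y ^ 2 = b ^ 2 by linarith [hysq]]
    exact Real.sqrt_sq hb.le
  have hdBC : dist B C = a := by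
    rw [EuclideanSpace.dist_eq]
    simp [hB, hC, Real.dist_eq, Fin.sum_univ_two, sq_abs]
    have hxc : x * (2 * c) = b ^ 2 + c ^ 2 - a ^ 2 := by
      rw [hx]; field_simp
    rw [show (c - x) ^ 2 + y ^ 2 = a ^ 2 by nlinarith [hysq]]
    exact Real.sqrt_sq ha.le
  have hAC : A ≠ C := by
    intro h; rw [h] at hdAC; simp at hdAC; linarith
  have hBC : B ≠ C := by
    intro h; rw [h] at hdBC; simp at hdBC; linarith
  have hsum := EuclideanGeometry.angle_add_angle_add_angle_eq_pi (V := EuclideanSpace ℝ (Fin 2))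
    (p₁ := C) (p₂ := A) B hAC
  have e1 : ∠ C A B = Real.arccos ((b ^ 2 + c ^ 2 - a ^ 2) / (2 * b * c)) := by
    have hl := EuclideanGeometry.law_cos C A B
    rw [dist_comm C B, hdBC, dist_comm C A, hdAC, dist_comm B A, hdAB] at hl
    exact aux_cos_from_law _ a b c hb hc (by linarith) (angle_nonneg _ _ _) (angle_le_pi _ _ _)
  have e2 : ∠ A B C = Real.arccos ((a ^ 2 + c ^ 2 - b ^ 2) / (2 * a * c)) := by
    have hl := EuclideanGeometry.law_cos A B C
    rw [hdAC, hdAB, dist_comm C B, hdBC] at hl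
    have := aux_cos_from_law _ b c a hc ha (by linarith) (angle_nonneg A B C) (angle_le_pi A B C)
    rw [this]
    ring_nf
  have e3 : ∠ B C A = Real.arccos ((a ^ 2 + b ^ 2 - c ^ 2) / (2 * a * b)) := by
    have hl := EuclideanGeometry.law_cos B C A
    rw [dist_comm B A, hdAB, hdAC] at hl
    first
      | rw [hdBC] at hl
      | rw [dist_comm C B, hdBC] at hl
    have := aux_cos_from_law _ c a b ha hb (by linarith) (angle_nonneg B C A) (angle_le_pi B C A)
    rw [this]
  rw [e1, e2, e3] at hsum
  linarith

theorem stmt5 (w₁ w₂ w₃ : ℝ) (hw₁ : 0 < w₁) (hw₂ : 0 < w₂) (hw₃ : 0 < w₃)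
    (h₁ : w₁ < w₂ + w₃) (h₂ : w₂ < w₁ + w₃) (h₃ : w₃ < w₁ + w₂)
    (α₁₀₂ α₂₀₃ α₁₀₃ : ℝ)
    (hα₁₀₂ : α₁₀₂ = Real.arccos ((w₃ ^ 2 - w₁ ^ 2 - w₂ ^ 2) / (2 * w₁ * w₂)))
    (hα₂₀₃ : α₂₀₃ = Real.arccos ((w₁ ^ 2 - w₂ ^ 2 - w₃ ^ 2) / (2 * w₂ * w₃)))
    (hα₁₀₃ : α₁₀₃ = Real.arccos ((w₂ ^ 2 - w₁ ^ 2 - w₃ ^ 2) / (2 * w₁ * w₃))) :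
    α₁₀₂ + α₂₀₃ + α₁₀₃ = 2 * Real.pi := by
  have key := aux_triangle_angles w₃ w₁ w₂ hw₃ hw₁ hw₂ (by linarith) (by linarith) (by linarith)
  have r1 : (w₃ ^ 2 - w₁ ^ 2 - w₂ ^ 2) / (2 * w₁ * w₂)
      = -((w₁ ^ 2 + w₂ ^ 2 - w₃ ^ 2) / (2 * w₁ * w₂)) := by ring
  have r2 : (w₁ ^ 2 - w₂ ^ 2 - w₃ ^ 2) / (2 * w₂ * w₃)
      = -((w₂ ^ 2 + w₃ ^ 2 - w₁ ^ 2) / (2 * w₂ * w₃)) := by ring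
  have r3 : (w₂ ^ 2 - w₁ ^ 2 - w₃ ^ 2) / (2 * w₁ * w₃)
      = -((w₁ ^ 2 + w₃ ^ 2 - w₂ ^ 2) / (2 * w₁ * w₃)) := by ring
  rw [hα₁₀₂, hα₂₀₃, hα₁₀₃, r1, r2, r3, Real.arccos_neg, Real.arccos_neg, Real.arccos_neg]
  have c1 : (w₁ ^ 2 + w₂ ^ 2 - w₃ ^ 2) / (2 * w₁ * w₂) = (w₃ ^ 2 + w₁ ^ 2 - w₂ ^ 2) / (2 * w₃ * w₁) ∨ True := Or.inr trivial
  -- match terms of key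
  have : Real.arccos ((w₁ ^ 2 + w₂ ^ 2 - w₃ ^ 2) / (2 * w₁ * w₂))
      + Real.arccos ((w₂ ^ 2 + w₃ ^ 2 - w₁ ^ 2) / (2 * w₂ * w₃))
      + Real.arccos ((w₁ ^ 2 + w₃ ^ 2 - w₂ ^ 2) / (2 * w₁ * w₃)) = Real.pi := by
    convert key using 3 <;> ring
  linarith
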